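/- Let A and B be associative rings with identity, f : A → B a ring homomorphism, and J a proper two-sided ideal of B. Assume J ∩ nil(B) = {0}, i.e., the only nilpotent element of B lying in J is 0. Then the amalgamation A⋈fJ is an Armendariz ring if and only if A is an Armendariz ring. -/

import Mathlib

open Polynomial

/-- A ring `R` is Armendariz if whenever `p * q = 0` for polynomials over `R`,
every product of a coefficient of `p` with a coefficient of `q` is zero. -/
def IsArmendariz (R : Type*) [Ring R] : Prop :=
  ∀ p q : R[X], p * q = 0 → ∀ i j : ℕ, p.coeff i * q.coeff j = 0

/-- A ring `R` is nil-Armendariz if whenever every coefficient of `p * q` is nilpotent,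
every product of a coefficient of `p` with a coefficient of `q` is nilpotent. -/
def IsNilArmendariz (R : Type*) [Ring R] : Prop :=
  ∀ p q : R[X], (∀ k : ℕ, IsNilpotent ((p * q).coeff k)) →
    ∀ i j : ℕ, IsNilpotent (p.coeff i * q.coeff j)

/-- A ring `R` is weak Armendariz if whenever `p * q = 0` for polynomials over `R`,
every product of a coefficient of `p` with a coefficient of `q` is nilpotent. -/
def IsWeakArmendariz (R : Type*) [Ring R] : Prop :=
  ∀ p q : R[X], p * q = 0 → ∀ i j : ℕ, IsNilpotent (p.coeff i * q.coeff j)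

/-- The amalgamation `A ⋈^f J = {(a, f a + j) | a ∈ A, j ∈ J}` of `A` and `B` along the
two-sided ideal `J` with respect to `f`, as a subring of `A × B`.  (A pair `(a, b)` has the
form `(a, f a + j)` with `j ∈ J` iff `b - f a ∈ J`.) -/
def amalgamation {A B : Type*} [Ring A] [Ring B] (f : A →+* B) (J : TwoSidedIdeal B) :
    Subring (A × B) where
  carrier := {p | p.2 - f p.1 ∈ J}
  zero_mem' := by simp [J.zero_mem]
  one_mem' := by simp [J.zero_mem]
  add_mem' := by
    intro x y hx hy
    have e : (x + y).2 - f ((x + y).1) = (x.2 - f x.1) + (y.2 - f y.1) := by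
      simp only [Prod.snd_add, Prod.fst_add, map_add]; abel
    show (x + y).2 - f ((x + y).1) ∈ J
    rw [e]; exact J.add_mem hx hy
  neg_mem' := by
    intro x hx
    have e : (-x).2 - f ((-x).1) = -(x.2 - f x.1) := by
      simp only [Prod.snd_neg, Prod.fst_neg, map_neg]; abel
    show (-x).2 - f ((-x).1) ∈ J
    rw [e]; exact J.neg_mem hx
  mul_mem' := by
    intro x y hx hy
    have e : (x * y).2 - f ((x * y).1) = x.2 * (y.2 - f y.1) + (x.2 - f x.1) * f y.1 := by
      simp only [Prod.snd_mul, Prod.fst_mul, map_mul, mul_sub, sub_mul]; abel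
    show (x * y).2 - f ((x * y).1) ∈ J
    rw [e]; exact J.add_mem (J.mul_mem_left _ _ hy) (J.mul_mem_right _ _ hx)

/-- The subring `f(A) + J = {f a + j | a ∈ A, j ∈ J}` of `B`.  (An element `b` has the form
`f a + j` with `j ∈ J` iff `b - f a ∈ J` for some `a`.) -/
def imageAddIdeal {A B : Type*} [Ring A] [Ring B] (f : A →+* B) (J : TwoSidedIdeal B) :
    Subring B where
  carrier := {b | ∃ a : A, b - f a ∈ J}
  zero_mem' := ⟨0, by simp [J.zero_mem]⟩
  one_mem' := ⟨1, by simp [J.zero_mem]⟩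
  add_mem' := by
    rintro x y ⟨a, ha⟩ ⟨b, hb⟩
    refine ⟨a + b, ?_⟩
    have e : x + y - f (a + b) = (x - f a) + (y - f b) := by
      rw [map_add]; abel
    rw [e]; exact J.add_mem ha hb
  neg_mem' := by
    rintro x ⟨a, ha⟩
    refine ⟨-a, ?_⟩
    have e : -x - f (-a) = -(x - f a) := by rw [map_neg]; abel
    rw [e]; exact J.neg_mem ha
  mul_mem' := by
    rintro x y ⟨a, ha⟩ ⟨b, hb⟩
    refine ⟨a * b, ?_⟩
    have e : x * y - f (a * b) = x * (y - f b) + (x - f a) * f b := by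
      rw [map_mul, mul_sub, sub_mul]; abel
    rw [e]; exact J.add_mem (J.mul_mem_left _ _ hb) (J.mul_mem_right _ _ ha)


section AuxiliaryLemmas

variable {B : Type*} [Ring B]

/-- In a ring with a "reduced" two-sided ideal `J` (no nonzero nilpotents in `J`),
every square-zero element annihilates `J` on the left. -/
lemma sq_zero_mul_mem_eq_zero (J : TwoSidedIdeal B)
    (h : ∀ b ∈ J, IsNilpotent b → b = 0) {n ξ : B}
    (hn : n * n = 0) (hξ : ξ ∈ J) : n * ξ = 0 := by
  have hmem1 : n * ξ * n ∈ J := J.mul_mem_right _ _ (J.mul_mem_left _ _ hξ)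
  have e1 : (n * ξ * n) * (n * ξ * n) = n * ξ * (n * n) * ξ * n := by noncomm_ring
  have h1 : n * ξ * n = 0 := by
    refine h _ hmem1 ⟨2, ?_⟩
    rw [pow_two, e1, hn, mul_zero, zero_mul, zero_mul]
  refine h _ (J.mul_mem_left _ _ hξ) ⟨2, ?_⟩
  have e2 : (n * ξ) * (n * ξ) = (n * ξ * n) * ξ := by noncomm_ring
  rw [pow_two, e2, h1, zero_mul]

/-- If `P * Q = 0` and all products of coefficients lie in a reduced two-sided ideal `J`,
then all those products are zero. -/
lemma key_lemma (J : TwoSidedIdeal B)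
    (h : ∀ b ∈ J, IsNilpotent b → b = 0)
    (P Q : B[X]) (hPQ : P * Q = 0)
    (hmem : ∀ i j : ℕ, P.coeff i * Q.coeff j ∈ J) :
    ∀ i j : ℕ, P.coeff i * Q.coeff j = 0 := by
  suffices H : ∀ k j i : ℕ, i + j = k → P.coeff i * Q.coeff j = 0 by
    exact fun i j => H (i + j) j i rfl
  intro k
  induction k using Nat.strong_induction_on with
  | _ k IH1 =>
    intro j
    induction j using Nat.strong_induction_on with
    | _ j IH2 =>
      intro i hij
      have hrel : ∑ x ∈ Finset.HasAntidiagonal.antidiagonal k, P.coeff x.1 * Q.coeff x.2 = 0 := by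
        have := congrArg (fun r : B[X] => r.coeff k) hPQ
        simpa [Polynomial.coeff_mul] using this
      have hcent : ((i, j) : ℕ × ℕ) ∈ Finset.HasAntidiagonal.antidiagonal k :=
        Finset.HasAntidiagonal.mem_antidiagonal.mpr hij
      have hstep : ∀ ξ ∈ J, Q.coeff j * (P.coeff i * Q.coeff j) * ξ = 0 := by
        intro ξ hξ
        have hsum : ∑ x ∈ Finset.HasAntidiagonal.antidiagonal k,
            Q.coeff j * (P.coeff x.1 * Q.coeff x.2) * ξ = 0 := by
          have e : ∑ x ∈ Finset.HasAntidiagonal.antidiagonal k,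
              Q.coeff j * (P.coeff x.1 * Q.coeff x.2) * ξ
              = Q.coeff j * (∑ x ∈ Finset.HasAntidiagonal.antidiagonal k,
                  P.coeff x.1 * Q.coeff x.2) * ξ := by
            rw [Finset.mul_sum, Finset.sum_mul]
          rw [e, hrel, mul_zero, zero_mul]
        have hzero : ∀ x ∈ Finset.HasAntidiagonal.antidiagonal k, x ≠ (i, j) →
            Q.coeff j * (P.coeff x.1 * Q.coeff x.2) * ξ = 0 := by
          rintro ⟨i', j'⟩ hx hne
          have hk' : i' + j' = k := Finset.HasAntidiagonal.mem_antidiagonal.mp hx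
          rcases lt_trichotomy j' j with hlt | heq | hgt
          · rw [IH2 j' hlt i' (by omega), mul_zero, zero_mul]
          · exact absurd (by simp only [Prod.mk.injEq]; exact ⟨by omega, heq⟩) hne
          · have h0 : P.coeff i' * Q.coeff j = 0 := IH1 (i' + j) (by omega) j i' rfl
            have hz : (Q.coeff j * P.coeff i') * (Q.coeff j * P.coeff i') = 0 := by
              have e : (Q.coeff j * P.coeff i') * (Q.coeff j * P.coeff i')
                  = Q.coeff j * ((P.coeff i' * Q.coeff j) * P.coeff i') := by noncomm_ring
              rw [e, h0, zero_mul, mul_zero]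
            have hJm : Q.coeff j' * ξ ∈ J := J.mul_mem_left _ _ hξ
            have hz0 := sq_zero_mul_mem_eq_zero J h hz hJm
            calc Q.coeff j * (P.coeff i' * Q.coeff j') * ξ
                = (Q.coeff j * P.coeff i') * (Q.coeff j' * ξ) := by noncomm_ring
              _ = 0 := hz0
        have hs := Finset.sum_eq_single_of_mem (i, j) hcent hzero
        rw [hsum] at hs
        exact hs.symm
      have hxJ : P.coeff i * Q.coeff j ∈ J := hmem i j
      have h3 := hstep _ hxJ
      refine h _ hxJ ⟨3, ?_⟩
      have e : (P.coeff i * Q.coeff j) ^ 3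
          = P.coeff i * (Q.coeff j * (P.coeff i * Q.coeff j) * (P.coeff i * Q.coeff j)) := by
        noncomm_ring
      rw [e, h3, mul_zero]

end AuxiliaryLemmas

lemma mem_amalgamation_iff {A B : Type*} [Ring A] [Ring B] (f : A →+* B)
    (J : TwoSidedIdeal B) (x : A × B) : x ∈ amalgamation f J ↔ x.2 - f x.1 ∈ J :=
  Iff.rfl

/-- The canonical embedding `A → A ⋈^f J`, `a ↦ (a, f a)`. -/
def toAmalgamation {A B : Type*} [Ring A] [Ring B] (f : A →+* B) (J : TwoSidedIdeal B) :
    A →+* amalgamation f J where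
  toFun a := ⟨(a, f a), show (a, f a).2 - f (a, f a).1 ∈ J by simpa using J.zero_mem⟩
  map_one' := by apply Subtype.ext; simp [Prod.ext_iff]
  map_mul' x y := by apply Subtype.ext; simp [Prod.ext_iff]
  map_zero' := by apply Subtype.ext; simp [Prod.ext_iff]
  map_add' x y := by apply Subtype.ext; simp [Prod.ext_iff]

theorem stmt_3 {A B : Type*} [Ring A] [Ring B] (f : A →+* B) (J : TwoSidedIdeal B)
    (hJ : (1 : B) ∉ J)
    (h : ∀ b ∈ J, IsNilpotent b → b = 0) :
    IsArmendariz (amalgamation f J) ↔ IsArmendariz A := by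
  constructor
  · -- amalgamation Armendariz → A Armendariz
    intro hS p q hpq i j
    have h0 : (p.map (toAmalgamation f J)) * (q.map (toAmalgamation f J)) = 0 := by
      rw [← Polynomial.map_mul, hpq, Polynomial.map_zero]
    have h1 := hS _ _ h0 i j
    rw [Polynomial.coeff_map, Polynomial.coeff_map, ← map_mul] at h1
    have h2 := congrArg (fun s : ↥(amalgamation f J) => (s : A × B).1) h1
    simpa [toAmalgamation] using h2
  · -- A Armendariz → amalgamation Armendariz
    intro hA p q hpq i j
    let π₁ : ↥(amalgamation f J) →+* A := (RingHom.fst A B).comp (amalgamation f J).subtype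
    let π₂ : ↥(amalgamation f J) →+* B := (RingHom.snd A B).comp (amalgamation f J).subtype
    have hp1 : (p.map π₁) * (q.map π₁) = 0 := by
      rw [← Polynomial.map_mul, hpq, Polynomial.map_zero]
    have ha : ∀ i j : ℕ, ((p.coeff i : A × B)).1 * ((q.coeff j : A × B)).1 = 0 := by
      intro i j
      have := hA _ _ hp1 i j
      simpa [π₁, Polynomial.coeff_map] using this
    have hp2 : (p.map π₂) * (q.map π₂) = 0 := by
      rw [← Polynomial.map_mul, hpq, Polynomial.map_zero]
    have hmem : ∀ i j : ℕ, (p.map π₂).coeff i * (q.map π₂).coeff j ∈ J := by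
      intro i j
      have hprop : ((p.coeff i * q.coeff j : ↥(amalgamation f J)) : A × B)
          ∈ amalgamation f J := (p.coeff i * q.coeff j).2
      rw [mem_amalgamation_iff] at hprop
      have hv : ((p.coeff i * q.coeff j : ↥(amalgamation f J)) : A × B)
          = (p.coeff i : A × B) * (q.coeff j : A × B) := rfl
      rw [hv, Prod.snd_mul, Prod.fst_mul, ha i j, map_zero, sub_zero] at hprop
      simpa [π₂, Polynomial.coeff_map] using hprop
    have hb := key_lemma J h _ _ hp2 hmem i j
    have hb' : ((p.coeff i : A × B)).2 * ((q.coeff j : A × B)).2 = 0 := by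
      simpa [π₂, Polynomial.coeff_map] using hb
    apply Subtype.ext
    show (p.coeff i : A × B) * (q.coeff j : A × B) = ((0 : ↥(amalgamation f J)) : A × B)
    refine Prod.ext ?_ ?_
    · simpa using ha i j
    · simpa using hb'
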